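/- In the multilayer e-filter setting with real-valued nonnegative e_g^(m) and null structure, let t = (t^(1),…,t^(M)) ∈ T(α^(1),…,α^(M)). Then for every m ∈ [M] with t^(m) < ∞, the layer-m false discovery proportion of the candidate selection set S(t) satisfies |S^(m)(t) ∩ H0^(m)|/(|S^(m)(t)| ∨ 1) ≤ (α^(m)/G^(m)) · Σ_{g∈H0^(m)} t^(m)·1{e_g^(m) ≥ t^(m)} ≤ (α^(m)/G^(m)) · Σ_{g∈H0^(m)} e_g^(m). -/

import Mathlib

open scoped ENNReal
open Filter MeasureTheory

namespace MultilayerEFilter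

variable {N M : ℕ} {G : Fin M → ℕ}

/-- Candidate selection set `S(t) = {j : e_{h(m,j)}^(m) ≥ t^(m) for all m}`. -/
noncomputable def sel (h : (m : Fin M) → Fin N → Fin (G m))
    (e : (m : Fin M) → Fin (G m) → ℝ≥0∞) (t : Fin M → ℝ≥0∞) : Finset (Fin N) :=
  Finset.univ.filter fun j => ∀ m, t m ≤ e m (h m j)

/-- Induced group selection `S^(m) = {g : A_g^(m) ∩ S ≠ ∅}`. -/
noncomputable def selGrp (A : (m : Fin M) → Fin (G m) → Finset (Fin N))
    (S : Finset (Fin N)) (m : Fin M) : Finset (Fin (G m)) :=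
  Finset.univ.filter fun g => ∃ j ∈ A m g, j ∈ S

/-- Estimated FDP at layer `m`: `(G^(m)/t^(m)) / (|S^(m)(t)| ∨ 1)` (with `G/∞ = 0`). -/
noncomputable def FDPhat (A : (m : Fin M) → Fin (G m) → Finset (Fin N))
    (h : (m : Fin M) → Fin N → Fin (G m))
    (e : (m : Fin M) → Fin (G m) → ℝ≥0∞) (t : Fin M → ℝ≥0∞) (m : Fin M) : ℝ≥0∞ :=
  ((G m : ℝ≥0∞) / t m) / ((max (selGrp A (sel h e t) m).card 1 : ℕ) : ℝ≥0∞)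

/-- Admissible threshold vectors. -/
noncomputable def admissible (A : (m : Fin M) → Fin (G m) → Finset (Fin N))
    (h : (m : Fin M) → Fin N → Fin (G m))
    (e : (m : Fin M) → Fin (G m) → ℝ≥0∞) (α : Fin M → ℝ) : Set (Fin M → ℝ≥0∞) :=
  {t | (∀ m, 1 ≤ t m) ∧ ∀ m, FDPhat A h e t m ≤ ENNReal.ofReal (α m)}

/-- Threshold of the generalized e-filter: coordinatewise minimum over admissible vectors. -/
noncomputable def filterThreshold (A : (m : Fin M) → Fin (G m) → Finset (Fin N))
    (h : (m : Fin M) → Fin N → Fin (G m))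
    (e : (m : Fin M) → Fin (G m) → ℝ≥0∞) (α : Fin M → ℝ) (m : Fin M) : ℝ≥0∞ :=
  sInf {s | ∃ t ∈ admissible A h e α, t m = s}

/-- Output of the generalized e-filter. -/
noncomputable def output (A : (m : Fin M) → Fin (G m) → Finset (Fin N))
    (h : (m : Fin M) → Fin N → Fin (G m))
    (e : (m : Fin M) → Fin (G m) → ℝ≥0∞) (α : Fin M → ℝ) : Finset (Fin N) :=
  sel h e (filterThreshold A h e α)

/-- Null groups at layer `m`: groups entirely contained in the null feature set. -/
def nullGrp (A : (m : Fin M) → Fin (G m) → Finset (Fin N))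
    (H0 : Finset (Fin N)) (m : Fin M) : Finset (Fin (G m)) :=
  Finset.univ.filter fun g => A m g ⊆ H0

/-- Layer-`m` false discovery proportion of a selected feature set. -/
noncomputable def FDP (A : (m : Fin M) → Fin (G m) → Finset (Fin N))
    (H0 : Finset (Fin N)) (S : Finset (Fin N)) (m : Fin M) : ℝ≥0∞ :=
  ((selGrp A S m ∩ nullGrp A H0 m).card : ℝ≥0∞) /
    ((max (selGrp A S m).card 1 : ℕ) : ℝ≥0∞)

end MultilayerEFilter

namespace MultilayerEFilter

/-!
STATEMENT 5 (key deterministic step in the proof of Lemma 2.7).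

Let `t ∈ T(α^(1),…,α^(M))` be an admissible threshold vector for real-valued
nonnegative e-values.  Then for every layer `m` with `t^(m) < ∞`, the layer-`m`
false discovery proportion of the candidate selection set `S(t)` satisfies
`|S^(m)(t) ∩ H0^(m)|/(|S^(m)(t)| ∨ 1)
   ≤ (α^(m)/G^(m)) · Σ_{g∈H0^(m)} t^(m)·1{e_g^(m) ≥ t^(m)}
   ≤ (α^(m)/G^(m)) · Σ_{g∈H0^(m)} e_g^(m)`.
-/

theorem stmt5 {N M : ℕ} (hN : 1 ≤ N) (hM : 1 ≤ M) {G : Fin M → ℕ}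
    (A : (m : Fin M) → Fin (G m) → Finset (Fin N))
    (h : (m : Fin M) → Fin N → Fin (G m))
    (hne : ∀ m g, (A m g).Nonempty)
    (hdisj : ∀ m, ∀ g₁ g₂ : Fin (G m), g₁ ≠ g₂ → Disjoint (A m g₁) (A m g₂))
    (hmem : ∀ m j, j ∈ A m (h m j))
    (H0 : Finset (Fin N))
    (e : (m : Fin M) → Fin (G m) → ℝ≥0∞) (hfin : ∀ m g, e m g ≠ ⊤)
    (α : Fin M → ℝ) (hα : ∀ m, α m ∈ Set.Ioo (0 : ℝ) 1)
    (t : Fin M → ℝ≥0∞) (ht : t ∈ admissible A h e α) :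
    ∀ m, t m ≠ ⊤ →
      FDP A H0 (sel h e t) m ≤
        ENNReal.ofReal (α m) / (G m : ℝ≥0∞) *
          ∑ g ∈ nullGrp A H0 m, (if t m ≤ e m g then t m else 0) ∧
      ENNReal.ofReal (α m) / (G m : ℝ≥0∞) *
          ∑ g ∈ nullGrp A H0 m, (if t m ≤ e m g then t m else 0) ≤
        ENNReal.ofReal (α m) / (G m : ℝ≥0∞) * ∑ g ∈ nullGrp A H0 m, e m g := by
  intro m htm
  obtain ⟨ht1, ht2⟩ := ht
  have ht0 : t m ≠ 0 := by
    intro h0; have := ht1 m; rw [h0] at this; simp at this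
  refine ⟨?_, ?_⟩
  swap
  · gcongr with g hg
    split_ifs with hle
    · exact hle
    · exact zero_le
  · set S := sel h e t with hS
    set c := (selGrp A S m ∩ nullGrp A H0 m).card with hc
    by_cases hc0 : c = 0
    · rw [FDP, ← hc, hc0]
      simp
    · have hG0 : G m ≠ 0 := by
        intro hg0
        apply hc0
        haveI : IsEmpty (Fin (G m)) := by rw [hg0]; exact Fin.isEmpty
        rw [hc, Finset.card_eq_zero]
        exact Finset.eq_empty_of_isEmpty _
      have hsub : selGrp A S m ∩ nullGrp A H0 m ⊆
          (nullGrp A H0 m).filter fun g => t m ≤ e m g := by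
        intro g hg
        rw [Finset.mem_inter] at hg
        obtain ⟨hgs, hnull⟩ := hg
        rw [Finset.mem_filter]
        refine ⟨hnull, ?_⟩
        rw [selGrp, Finset.mem_filter] at hgs
        obtain ⟨-, j, hjA, hjS⟩ := hgs
        have hj : h m j = g := by
          by_contra hne'
          exact (Finset.disjoint_left.mp (hdisj m _ _ hne') (hmem m j)) hjA
        have := (Finset.mem_filter.mp hjS).2 m
        rwa [hj] at this
      set n := ((nullGrp A H0 m).filter fun g => t m ≤ e m g).card with hn
      have hcn : (c : ℝ≥0∞) ≤ (n : ℝ≥0∞) := by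
        exact_mod_cast Finset.card_le_card hsub
      have hsum : ∑ g ∈ nullGrp A H0 m, (if t m ≤ e m g then t m else 0)
          = (n : ℝ≥0∞) * t m := by
        rw [← Finset.sum_filter, Finset.sum_const, nsmul_eq_mul]
      set D := (max (selGrp A S m).card 1 : ℕ) with hD
      have hD0 : (D : ℝ≥0∞) ≠ 0 := by
        simp [hD]
      have hDtop : (D : ℝ≥0∞) ≠ ⊤ := ENNReal.natCast_ne_top _
      have hGtop : (G m : ℝ≥0∞) ≠ ⊤ := ENNReal.natCast_ne_top _
      have hGne : (G m : ℝ≥0∞) ≠ 0 := by exact_mod_cast hG0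
      have hhat := ht2 m
      rw [FDPhat] at hhat
      have hkey : (1 : ℝ≥0∞) / D ≤ ENNReal.ofReal (α m) * t m / G m := by
        have heq : ((G m : ℝ≥0∞) / t m / D) * (t m / G m) = 1 / D := by
          rw [div_eq_mul_inv, div_eq_mul_inv, div_eq_mul_inv, one_div]
          have h1 : (G m : ℝ≥0∞) * (G m : ℝ≥0∞)⁻¹ = 1 := ENNReal.mul_inv_cancel hGne hGtop
          have h2 : (t m) * (t m)⁻¹ = 1 := ENNReal.mul_inv_cancel ht0 htm
          calc (G m : ℝ≥0∞) * (t m)⁻¹ * (D : ℝ≥0∞)⁻¹ * (t m * (G m : ℝ≥0∞)⁻¹)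
              = ((G m : ℝ≥0∞) * (G m : ℝ≥0∞)⁻¹) * ((t m) * (t m)⁻¹) * (D : ℝ≥0∞)⁻¹ := by
                ring
            _ = (D : ℝ≥0∞)⁻¹ := by rw [h1, h2]; ring
        calc (1 : ℝ≥0∞) / D = ((G m : ℝ≥0∞) / t m / D) * (t m / G m) := heq.symm
          _ ≤ ENNReal.ofReal (α m) * (t m / G m) := by
              exact mul_le_mul_left hhat _
          _ = ENNReal.ofReal (α m) * t m / G m := by
              rw [mul_div_assoc]
      rw [FDP, ← hc, ← hD, hsum]
      calc (c : ℝ≥0∞) / D = (c : ℝ≥0∞) * (1 / D) := by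
            rw [mul_one_div]
        _ ≤ (c : ℝ≥0∞) * (ENNReal.ofReal (α m) * t m / G m) := by
            exact mul_le_mul_right hkey _
        _ ≤ (n : ℝ≥0∞) * (ENNReal.ofReal (α m) * t m / G m) := by
            exact mul_le_mul_left hcn _
        _ = ENNReal.ofReal (α m) / (G m : ℝ≥0∞) * ((n : ℝ≥0∞) * t m) := by
            rw [div_eq_mul_inv, div_eq_mul_inv]; ring

end MultilayerEFilter
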